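/- Let G and H be discrete groups and X : H ← G a groupoid correspondence. Then X is a discrete set with commuting free right G-action and left H-action, and choosing a section of X → X/G =: A yields a G-equivariant bijection X ≅ A × G under which the left H-action takes the form h·(x,g) = (π_h(x), φ(h,x)·g), where π is an H-action on A and φ : H × A → G is a 1-cocycle, i.e., φ(h₁h₂, x) = φ(h₁, π_{h₂}(x))·φ(h₂, x) for all h₁, h₂ ∈ H and x ∈ A. -/

import Mathlib

open Topology

/-- An étale topological groupoid, given by its arrow space `A` and object space `O`. -/
structure EtaleGroupoid (A O : Type) [TopologicalSpace A] [TopologicalSpace O] where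
  r : A → O
  s : A → O
  unit : O → A
  mul : A → A → A
  inv : A → A
  r_unit : ∀ o, r (unit o) = o
  s_unit : ∀ o, s (unit o) = o
  r_mul : ∀ g h, s g = r h → r (mul g h) = r g
  s_mul : ∀ g h, s g = r h → s (mul g h) = s h
  mul_assoc : ∀ g h k, s g = r h → s h = r k → mul (mul g h) k = mul g (mul h k)
  unit_mul : ∀ g, mul (unit (r g)) g = g
  mul_unit : ∀ g, mul g (unit (s g)) = g
  r_inv : ∀ g, r (inv g) = s g
  s_inv : ∀ g, s (inv g) = r g
  mul_inv : ∀ g, mul g (inv g) = unit (r g)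
  inv_mul : ∀ g, mul (inv g) g = unit (s g)
  etale_r : IsLocalHomeomorph r
  etale_s : IsLocalHomeomorph s
  continuous_mul : Continuous fun p : { p : A × A // s p.1 = r p.2 } => mul p.1.1 p.1.2
  continuous_inv : Continuous inv

variable {A O : Type} [TopologicalSpace A] [TopologicalSpace O]

/-- A right action of an étale groupoid on a topological space `X`. -/
structure RightAction (G : EtaleGroupoid A O) (X : Type) [TopologicalSpace X] where
  anchor : X → O
  act : X → A → X
  continuous_anchor : Continuous anchor
  continuous_act :
    Continuous fun p : { p : X × A // anchor p.1 = G.r p.2 } => act p.1.1 p.1.2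
  anchor_act : ∀ x g, anchor x = G.r g → anchor (act x g) = G.s g
  act_mul : ∀ x g h, anchor x = G.r g → G.s g = G.r h →
    act (act x g) h = act x (G.mul g h)
  act_unit : ∀ x, act x (G.unit (anchor x)) = x

/-- A left action of an étale groupoid on a topological space `X`. -/
structure LeftAction (G : EtaleGroupoid A O) (X : Type) [TopologicalSpace X] where
  anchor : X → O
  act : A → X → X
  continuous_anchor : Continuous anchor
  continuous_act :
    Continuous fun p : { p : A × X // G.s p.1 = anchor p.2 } => act p.1.1 p.1.2
  anchor_act : ∀ g x, G.s g = anchor x → anchor (act g x) = G.r g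
  mul_act : ∀ g h x, G.s g = G.r h → G.s h = anchor x →
    act g (act h x) = act (G.mul g h) x
  unit_act : ∀ x, act (G.unit (anchor x)) x = x

namespace RightAction

variable {G : EtaleGroupoid A O} {X : Type} [TopologicalSpace X]

/-- The map `(x, g) ↦ (x·g, x)` on the fibre product `X ×_{s,G⁰,r} G`. -/
def pairMap (ρ : RightAction G X) :
    { p : X × A // ρ.anchor p.1 = G.r p.2 } → X × X :=
  fun p => (ρ.act p.1.1 p.1.2, p.1.1)

/-- The action is *basic* if `pairMap` is a homeomorphism onto its image. -/
def IsBasic (ρ : RightAction G X) : Prop := Topology.IsEmbedding ρ.pairMap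

/-- The action is *free* if `pairMap` is injective. -/
def IsFree (ρ : RightAction G X) : Prop := Function.Injective ρ.pairMap

/-- The action is *proper* if `pairMap` is a proper map. -/
def IsProper (ρ : RightAction G X) : Prop := IsProperMap ρ.pairMap

/-- Two points are orbit equivalent if one is a translate of the other. -/
def OrbitRel (ρ : RightAction G X) (x y : X) : Prop :=
  ∃ g, ρ.anchor x = G.r g ∧ y = ρ.act x g

/-- The orbit space `X/G`, with the quotient topology. -/
def OrbitSpace (ρ : RightAction G X) : Type := Quot ρ.OrbitRel

instance (ρ : RightAction G X) : TopologicalSpace ρ.OrbitSpace :=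
  instTopologicalSpaceQuot

/-- The orbit space projection `p : X → X/G`. -/
def orbitMap (ρ : RightAction G X) : X → ρ.OrbitSpace := Quot.mk _

end RightAction

variable {AH OH : Type} [TopologicalSpace AH] [TopologicalSpace OH]

/-- A groupoid correspondence `X : H ← G`: commuting left `H`- and right `G`-actions
such that the right anchor map is a local homeomorphism and the right action is free
and proper. -/
structure Correspondence (H : EtaleGroupoid AH OH) (G : EtaleGroupoid A O)
    (X : Type) [TopologicalSpace X] where
  left : LeftAction H X
  right : RightAction G X
  sInv_left : ∀ h x, H.s h = left.anchor x →
    right.anchor (left.act h x) = right.anchor x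
  rInv_right : ∀ x g, right.anchor x = G.r g →
    left.anchor (right.act x g) = left.anchor x
  comm : ∀ h x g, H.s h = left.anchor x → right.anchor x = G.r g →
    left.act h (right.act x g) = right.act (left.act h x) g
  etale_s : IsLocalHomeomorph right.anchor
  free : right.IsFree
  proper : right.IsProper

namespace Correspondence

variable {H : EtaleGroupoid AH OH} {G : EtaleGroupoid A O}
  {X : Type} [TopologicalSpace X]

/-- The map `r_* : X/G → H⁰` induced by the left anchor map. -/
def rStar (C : Correspondence H G X) : C.right.OrbitSpace → OH :=
  Quot.lift C.left.anchor (by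
    rintro x y ⟨g, hg, rfl⟩
    exact (C.rInv_right x g hg).symm)

end Correspondence
section Statement19

/-- Any map from a discrete space to `Unit` is a local homeomorphism. -/
theorem discrete_to_unit_isLocalHomeomorph {X : Type} [TopologicalSpace X]
    [DiscreteTopology X] (f : X → Unit) : IsLocalHomeomorph f := by
  intro x
  refine ⟨⟨⟨⟨f, fun _ => x, {x}, Set.univ, ?_, ?_, ?_, ?_⟩, ?_, ?_⟩, ?_, ?_⟩, rfl, ?_⟩
  · intro a _; trivial
  · intro a _; exact rfl
  · rintro a rfl; rfl
  · intro a _; exact Subsingleton.elim _ _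
  · exact (continuous_of_discreteTopology).continuousOn
  · exact continuous_const.continuousOn
  · exact isOpen_discrete _
  · exact isOpen_univ
  · rfl

/-- A discrete group, viewed as an étale groupoid with a single object. -/
def groupGroupoid (Γ : Type) [Group Γ] [TopologicalSpace Γ]
    [DiscreteTopology Γ] : EtaleGroupoid Γ Unit where
  r _ := ()
  s _ := ()
  unit _ := 1
  mul g h := g * h
  inv g := g⁻¹
  r_unit _ := rfl
  s_unit _ := rfl
  r_mul _ _ _ := rfl
  s_mul _ _ _ := rfl
  mul_assoc g h k _ _ := mul_assoc g h k
  unit_mul g := one_mul g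
  mul_unit g := mul_one g
  r_inv _ := rfl
  s_inv _ := rfl
  mul_inv g := mul_inv_cancel g
  inv_mul g := inv_mul_cancel g
  etale_r := discrete_to_unit_isLocalHomeomorph _
  etale_s := discrete_to_unit_isLocalHomeomorph _
  continuous_mul := continuous_of_discreteTopology
  continuous_inv := continuous_of_discreteTopology

/-- Let `G` and `H` be discrete groups and `X : H ← G` a groupoid
correspondence.  Then `X` is discrete, and choosing a section of
`X → X/G =: A` yields a `G`-equivariant bijection `X ≅ A × G` whose first
component is the orbit map, under which the left `H`-action takes the form
`h·(a,g) = (π h a, φ h a * g)`, where `π` is an `H`-action on `A` and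
`φ : H × A → G` is a `1`-cocycle: `φ (h₁h₂) a = φ h₁ (π h₂ a) * φ h₂ a`. -/
theorem discrete_group_correspondence_structure
    {Γ Λ : Type} [Group Γ] [TopologicalSpace Γ] [DiscreteTopology Γ]
    [Group Λ] [TopologicalSpace Λ] [DiscreteTopology Λ]
    {X : Type} [TopologicalSpace X]
    (C : Correspondence (groupGroupoid Λ) (groupGroupoid Γ) X) :
    DiscreteTopology X ∧
    ∃ e : X ≃ C.right.OrbitSpace × Γ,
      (∀ x, (e x).1 = C.right.orbitMap x) ∧
      (∀ x g, e (C.right.act x g) = ((e x).1, (e x).2 * g)) ∧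
      ∃ (π : Λ → C.right.OrbitSpace → C.right.OrbitSpace)
        (φ : Λ → C.right.OrbitSpace → Γ),
        (∀ h x, e (C.left.act h x) = (π h (e x).1, φ h (e x).1 * (e x).2)) ∧
        (∀ a, π 1 a = a) ∧
        (∀ h₁ h₂ a, π (h₁ * h₂) a = π h₁ (π h₂ a)) ∧
        (∀ h₁ h₂ a, φ (h₁ * h₂) a = φ h₁ (π h₂ a) * φ h₂ a) := by
  classical
  -- X is discrete, since the right anchor map X → Unit is a local homeomorphism
  have hdisc : DiscreteTopology X := by
    rw [discreteTopology_iff_isOpen_singleton]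
    intro x
    obtain ⟨e, hx, -⟩ := C.etale_s x
    have hss : ({x} : Set X) = e.source := by
      apply Set.eq_of_subset_of_subset
      · simpa using hx
      · intro y hy
        exact e.injOn hy hx (Subsingleton.elim _ _)
    rw [hss]; exact e.open_source
  refine ⟨hdisc, ?_⟩
  -- Basic facts about the right action
  have act_one : ∀ x, C.right.act x 1 = x := fun x => C.right.act_unit x
  have act_mul' : ∀ x (g h : Γ),
      C.right.act (C.right.act x g) h = C.right.act x (g * h) :=
    fun x g h => C.right.act_mul x g h (Subsingleton.elim _ _) (Subsingleton.elim _ _)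
  have free' : ∀ (x : X) (g g' : Γ), C.right.act x g = C.right.act x g' → g = g' := by
    intro x g g' hgg
    have := C.free (a₁ := ⟨(x, g), Subsingleton.elim _ _⟩)
      (a₂ := ⟨(x, g'), Subsingleton.elim _ _⟩)
      (by simp [RightAction.pairMap, hgg])
    exact congrArg (fun p => p.1.2) this
  have orbit_act : ∀ (x : X) (g : Γ),
      C.right.orbitMap (C.right.act x g) = C.right.orbitMap x :=
    fun x g => (Quot.sound ⟨g, Subsingleton.elim _ _, rfl⟩).symm
  -- OrbitRel is an equivalence relation
  have hequiv : Equivalence C.right.OrbitRel := by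
    constructor
    · intro x; exact ⟨1, Subsingleton.elim _ _, (act_one x).symm⟩
    · rintro x y ⟨g, -, rfl⟩
      exact ⟨g⁻¹, Subsingleton.elim _ _, by rw [act_mul', mul_inv_cancel, act_one]⟩
    · rintro x y z ⟨g, -, rfl⟩ ⟨h, -, rfl⟩
      exact ⟨g * h, Subsingleton.elim _ _, act_mul' x g h⟩
  have orbit_eq : ∀ x y : X,
      C.right.orbitMap x = C.right.orbitMap y → C.right.OrbitRel x y := by
    intro x y h
    exact (hequiv.eqvGen_iff).mp (Quot.eq.mp h)
  -- A section of the orbit map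
  set sec : C.right.OrbitSpace → X := Quot.out with hsecdef
  have sec_orbit : ∀ a, C.right.orbitMap (sec a) = a := fun a => Quot.out_eq a
  have hτ : ∀ x : X, ∃ g : Γ, C.right.act (sec (C.right.orbitMap x)) g = x := by
    intro x
    obtain ⟨g, -, hg⟩ := orbit_eq (sec (C.right.orbitMap x)) x (sec_orbit _)
    exact ⟨g, hg.symm⟩
  let τ : X → Γ := fun x => (hτ x).choose
  have τ_spec : ∀ x, C.right.act (sec (C.right.orbitMap x)) (τ x) = x :=
    fun x => (hτ x).choose_spec
  -- The equivariant bijection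
  let e : X ≃ C.right.OrbitSpace × Γ :=
    { toFun := fun x => (C.right.orbitMap x, τ x)
      invFun := fun p => C.right.act (sec p.1) p.2
      left_inv := fun x => τ_spec x
      right_inv := by
        rintro ⟨a, g⟩
        have h1 : C.right.orbitMap (C.right.act (sec a) g) = a := by
          rw [orbit_act, sec_orbit]
        refine Prod.ext h1 ?_
        show τ (C.right.act (sec a) g) = g
        apply free' (sec a)
        have h2 := τ_spec (C.right.act (sec a) g)
        rw [h1] at h2
        exact h2 }
  have e_act : ∀ x g, e (C.right.act x g) = ((e x).1, (e x).2 * g) := by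
    intro x g
    refine Prod.ext (orbit_act x g) ?_
    show τ (C.right.act x g) = τ x * g
    apply free' (sec (C.right.orbitMap x))
    have h1 := τ_spec (C.right.act x g)
    rw [orbit_act] at h1
    rw [h1, ← act_mul', τ_spec]
  -- The left action lemmas
  have lact_one : ∀ x, C.left.act 1 x = x := fun x => C.left.unit_act x
  have lact_mul : ∀ (h₁ h₂ : Λ) x,
      C.left.act (h₁ * h₂) x = C.left.act h₁ (C.left.act h₂ x) :=
    fun h₁ h₂ x =>
      (C.left.mul_act h₁ h₂ x (Subsingleton.elim _ _) (Subsingleton.elim _ _)).symm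
  have comm' : ∀ (h : Λ) x (g : Γ),
      C.left.act h (C.right.act x g) = C.right.act (C.left.act h x) g :=
    fun h x g => C.comm h x g (Subsingleton.elim _ _) (Subsingleton.elim _ _)
  -- The induced action and cocycle
  let π : Λ → C.right.OrbitSpace → C.right.OrbitSpace :=
    fun h a => (e (C.left.act h (sec a))).1
  let φ : Λ → C.right.OrbitSpace → Γ :=
    fun h a => (e (C.left.act h (sec a))).2
  have key : ∀ (h : Λ) (x : X),
      e (C.left.act h x) = (π h (e x).1, φ h (e x).1 * (e x).2) := by
    intro h x
    conv_lhs => rw [← τ_spec x]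
    rw [comm', e_act]
    rfl
  have π_one : ∀ a, π (1 : Λ) a = a := by
    intro a
    show (e (C.left.act 1 (sec a))).1 = a
    rw [lact_one]
    exact sec_orbit a
  have comp : ∀ (h₁ h₂ : Λ) a, e (C.left.act (h₁ * h₂) (sec a)) =
      (π h₁ (π h₂ a), φ h₁ (π h₂ a) * φ h₂ a) := by
    intro h₁ h₂ a
    rw [lact_mul, key]
  have π_mul : ∀ (h₁ h₂ : Λ) a, π (h₁ * h₂) a = π h₁ (π h₂ a) := by
    intro h₁ h₂ a
    show (e (C.left.act (h₁ * h₂) (sec a))).1 = π h₁ (π h₂ a)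
    rw [comp h₁ h₂ a]
  have φ_cocycle : ∀ (h₁ h₂ : Λ) a, φ (h₁ * h₂) a = φ h₁ (π h₂ a) * φ h₂ a := by
    intro h₁ h₂ a
    show (e (C.left.act (h₁ * h₂) (sec a))).2 = φ h₁ (π h₂ a) * φ h₂ a
    rw [comp h₁ h₂ a]
  exact ⟨e, fun _ => rfl, e_act, π, φ, key, π_one, π_mul, φ_cocycle⟩

end Statement19
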